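/- arXiv:2511.14562 — 2 statements merged into one kernel-verified Lean document; each statement's English description precedes it below -/
import Mathlib

section
/- Let G be a finite group with subgroups H and B, and let X be a subset of G that is a union of double cosets H·x·B and satisfies H·B ⊆ X. If B is normalized by every element of X (i.e., x·B·x⁻¹ = B for all x ∈ X) and |X| = 2·|H·B|, then X is the disjoint union of exactly two double cosets: X = H·B ∪ H·w·B for some w ∈ X with w ∉ H·B. -/
open scoped Pointwise

theorem stmt_3 {G : Type*} [Group G] [Fintype G] (H B : Subgroup G) (X : Set G)
    (hunion : ∀ x ∈ X, (H : Set G) * {x} * (B : Set G) ⊆ X)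
    (hHB : (H : Set G) * (B : Set G) ⊆ X)
    (hnorm : ∀ x ∈ X, {x} * (B : Set G) * {x⁻¹} = (B : Set G))
    (hcard : Nat.card X = 2 * Nat.card ((H : Set G) * (B : Set G))) :
    ∃ w ∈ X, w ∉ (H : Set G) * (B : Set G) ∧
      X = (H : Set G) * (B : Set G) ∪ (H : Set G) * {w} * (B : Set G) ∧
      Disjoint ((H : Set G) * (B : Set G)) ((H : Set G) * {w} * (B : Set G)) := by
  classical
  set S : Set G := (H : Set G) * (B : Set G) with hS
  have hfinS : S.Finite := Set.toFinite _
  have hfinX : X.Finite := Set.toFinite _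
  have hcard' : X.ncard = 2 * S.ncard := by
    rw [Nat.card_coe_set_eq, Nat.card_coe_set_eq] at hcard
    exact hcard
  have h1S : (1 : G) ∈ S := ⟨1, H.one_mem, 1, B.one_mem, by simp⟩
  have hSpos : 0 < S.ncard := (Set.ncard_pos hfinS).mpr ⟨1, h1S⟩
  have hne : ¬ (X ⊆ S) := by
    intro hsub
    have := Set.ncard_le_ncard hsub hfinS
    omega
  obtain ⟨w, hwX, hwS⟩ := Set.not_subset.mp hne
  have h := hnorm w hwX
  have hdisj : Disjoint S ((H : Set G) * {w} * (B : Set G)) := by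
    rw [Set.disjoint_left]
    rintro z hz1 hz2
    obtain ⟨h1, hh1, b, hb, rfl⟩ := hz1
    obtain ⟨u, ⟨h', hh', w', hw'', rfl⟩, b', hb', heq⟩ := hz2
    have hwe : w' = w := hw''
    have heq2 : h' * w' * b' = h1 * b := heq
    rw [hwe] at heq2
    apply hwS
    refine ⟨h'⁻¹ * h1, H.mul_mem (H.inv_mem hh') hh1, b * b'⁻¹,
      B.mul_mem hb (B.inv_mem hb'), ?_⟩
    show h'⁻¹ * h1 * (b * b'⁻¹) = w
    rw [show h'⁻¹ * h1 * (b * b'⁻¹) = h'⁻¹ * (h1 * b) * b'⁻¹ by group, ← heq2]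
    group
  refine ⟨w, hwX, hwS, ?_, hdisj⟩
  have hcomm : ({w} : Set G) * (B : Set G) = (B : Set G) * {w} := by
    have h2 := congrArg (· * ({w} : Set G)) h
    rw [mul_assoc (({w} : Set G) * (B : Set G)), Set.singleton_mul_singleton,
      inv_mul_cancel] at h2
    simpa [Set.singleton_one] using h2
  have hHwB : (H : Set G) * {w} * (B : Set G) = S * {w} := by
    rw [mul_assoc, hcomm, ← mul_assoc]
  have hcardHwB : ((H : Set G) * {w} * (B : Set G)).ncard = S.ncard := by
    rw [hHwB, Set.mul_singleton]
    exact Set.ncard_image_of_injective _ (mul_left_injective w)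
  have hsub : S ∪ (H : Set G) * {w} * (B : Set G) ⊆ X :=
    Set.union_subset hHB (hunion w hwX)
  have hcardu : (S ∪ (H : Set G) * {w} * (B : Set G)).ncard = X.ncard := by
    rw [Set.ncard_union_eq hdisj hfinS (Set.toFinite _), hcardHwB, hcard']
    omega
  exact (Set.eq_of_subset_of_ncard_le hsub (le_of_eq hcardu.symm) hfinX).symm
end

section
/- Let G be a finite group with subgroups H and B, and let X be a subset of G that is a union of (H,B)-double cosets containing H·B. If H is normalized by every element of X (i.e., x·H·x⁻¹ = H for all x ∈ X) and |X| = 2·|H·B|, then X = H·B ∪ H·w·B for some w ∉ H·B, a disjoint union of two double cosets. -/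
open scoped Pointwise

theorem stmt_4 {G : Type*} [Group G] [Fintype G] (H B : Subgroup G) (X : Set G)
    (hunion : ∀ x ∈ X, (H : Set G) * {x} * (B : Set G) ⊆ X)
    (hHB : (H : Set G) * (B : Set G) ⊆ X)
    (hnorm : ∀ x ∈ X, {x} * (H : Set G) * {x⁻¹} = (H : Set G))
    (hcard : Nat.card X = 2 * Nat.card ((H : Set G) * (B : Set G))) :
    ∃ w ∈ X, w ∉ (H : Set G) * (B : Set G) ∧
      X = (H : Set G) * (B : Set G) ∪ (H : Set G) * {w} * (B : Set G) ∧
      Disjoint ((H : Set G) * (B : Set G)) ((H : Set G) * {w} * (B : Set G)) := by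
  classical
  set S : Set G := (H : Set G) * (B : Set G) with hS
  -- cardinalities as ncard
  have hfinX : X.Finite := Set.toFinite X
  have hfinS : S.Finite := Set.toFinite S
  have hcard' : X.ncard = 2 * S.ncard := by
    rw [Nat.card_coe_set_eq, Nat.card_coe_set_eq] at hcard
    exact hcard
  have hSne : S.Nonempty := ⟨1, by
    rw [hS]; exact ⟨1, H.one_mem, 1, B.one_mem, by simp⟩⟩
  have hSpos : 0 < S.ncard := (Set.ncard_pos hfinS).mpr hSne
  -- find w
  have hex : ∃ w, w ∈ X ∧ w ∉ S := by
    by_contra h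
    push_neg at h
    have hsub : X ⊆ S := fun x hx => h x hx
    have := Set.ncard_le_ncard hsub hfinS
    omega
  obtain ⟨w, hwX, hwS⟩ := hex
  refine ⟨w, hwX, hwS, ?_⟩
  have hsubw : (H : Set G) * {w} * (B : Set G) ⊆ X := hunion w hwX
  -- {w} * H = H * {w}
  have hcomm : ({w} : Set G) * (H : Set G) = (H : Set G) * {w} := by
    have h1 := hnorm w hwX
    have : ({w} : Set G) * (H : Set G) * {w⁻¹} * {w} = (H : Set G) * {w} := by
      rw [h1]
    rwa [mul_assoc, Set.singleton_mul_singleton, inv_mul_cancel,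
      Set.singleton_one, mul_one] at this
  -- card of H * {w} * B equals card S
  have hcardw : ((H : Set G) * {w} * (B : Set G)).ncard = S.ncard := by
    have h2 : (H : Set G) * {w} * (B : Set G) = ({w} : Set G) * S := by
      rw [hS, ← hcomm, mul_assoc]
    rw [h2, Set.singleton_mul]
    exact Set.ncard_image_of_injective _ (mul_right_injective w)
  -- disjointness
  have hdisj : Disjoint S ((H : Set G) * {w} * (B : Set G)) := by
    rw [Set.disjoint_left]
    rintro a haS ⟨c, ⟨h1, hh1, w', hw', rfl⟩, b, hb, rfl⟩
    obtain ⟨h2, hh2, b2, hb2, hab⟩ := haS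
    rw [Set.mem_singleton_iff] at hw'
    apply hwS
    simp only at hab
    have hw : w = h1⁻¹ * (h2 * b2) * b⁻¹ := by
      rw [hab, hw']; group
    rw [hw]
    have : h1⁻¹ * (h2 * b2) * b⁻¹ = (h1⁻¹ * h2) * (b2 * b⁻¹) := by group
    rw [this]
    exact ⟨h1⁻¹ * h2, H.mul_mem (H.inv_mem hh1) hh2, b2 * b⁻¹,
      B.mul_mem hb2 (B.inv_mem hb), rfl⟩
  refine ⟨?_, hdisj⟩
  -- equality by cardinality
  have hsub : S ∪ (H : Set G) * {w} * (B : Set G) ⊆ X := Set.union_subset hHB hsubw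
  have hcu : (S ∪ (H : Set G) * {w} * (B : Set G)).ncard = 2 * S.ncard := by
    rw [Set.ncard_union_eq hdisj hfinS (Set.toFinite _), hcardw]
    ring
  exact (Set.eq_of_subset_of_ncard_le hsub (by omega) hfinX).symm
end
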